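/- Let K₁/K and K₂/K be finite Galois extensions with K₁ ∩ K₂ = K, and let L be an intermediate field of K₁K₂/K with L ∩ K₁ = K and L ∩ K₂ = K. Then [LK₁ ∩ LK₂ : L] = [L : K]. -/

import Mathlib

open IntermediateField Module

section GroupAux

variable {G : Type*} [Group G]

/-- Product formula: `|H ⊔ N| * |H ⊓ N| = |H| * |N|` for `N` normal. -/
lemma aux_card_sup_mul_card_inf (H N : Subgroup G) [N.Normal] :
    Nat.card ↥(H ⊔ N) * Nat.card ↥(H ⊓ N) = Nat.card ↥H * Nat.card ↥N := by
  have e := QuotientGroup.quotientInfEquivProdNormalQuotient H N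
  have lag1 : Nat.card ↥H =
      Nat.card (↥H ⧸ N.subgroupOf H) * Nat.card ↥(N.subgroupOf H) :=
    Subgroup.card_eq_card_quotient_mul_card_subgroup _
  have lag2 : Nat.card ↥(H ⊔ N) =
      Nat.card (↥(H ⊔ N) ⧸ N.subgroupOf (H ⊔ N)) * Nat.card ↥(N.subgroupOf (H ⊔ N)) :=
    Subgroup.card_eq_card_quotient_mul_card_subgroup _
  have hq : Nat.card (↥H ⧸ N.subgroupOf H)
      = Nat.card (↥(H ⊔ N) ⧸ N.subgroupOf (H ⊔ N)) := Nat.card_congr e.toEquiv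
  have h1 : Nat.card ↥(N.subgroupOf H) = Nat.card ↥(H ⊓ N) := by
    rw [← Subgroup.inf_subgroupOf_left N H]
    exact Nat.card_congr (Subgroup.subgroupOfEquivOfLe inf_le_left).toEquiv
  have h2 : Nat.card ↥(N.subgroupOf (H ⊔ N)) = Nat.card ↥N :=
    Nat.card_congr (Subgroup.subgroupOfEquivOfLe le_sup_right).toEquiv
  rw [lag2, ← hq, h2, lag1, h1]
  ring

end GroupAux

section FieldKey

variable {F E : Type*} [Field F] [Field E] [Algebra F E] [FiniteDimensional F E] [IsGalois F E]

lemma finrank_eq_card_fixingSubgroup (A : IntermediateField F E) :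
    finrank ↥A E = Nat.card ↥(fixingSubgroup A) := by
  classical
  conv_lhs => rw [← IsGalois.fixedField_fixingSubgroup A]
  rw [IntermediateField.finrank_fixedField_eq_card, Nat.card_eq_fintype_card]

lemma relfinrank_mul_card_fixing {A B : IntermediateField F E} (h : A ≤ B) :
    relfinrank A B * Nat.card ↥(fixingSubgroup B) = Nat.card ↥(fixingSubgroup A) := by
  rw [← finrank_eq_card_fixingSubgroup, ← finrank_eq_card_fixingSubgroup]
  exact relfinrank_mul_finrank_top h

lemma fixingSubgroup_sup' (A B : IntermediateField F E) :
    fixingSubgroup (A ⊔ B) = fixingSubgroup A ⊓ fixingSubgroup B :=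
  (IsGalois.intermediateFieldEquivSubgroup (F := F) (E := E)).map_sup A B

lemma fixingSubgroup_inf' (A B : IntermediateField F E) :
    fixingSubgroup (A ⊓ B) = fixingSubgroup A ⊔ fixingSubgroup B :=
  (IsGalois.intermediateFieldEquivSubgroup (F := F) (E := E)).map_inf A B

lemma fixingSubgroup_top' :
    fixingSubgroup (⊤ : IntermediateField F E) = ⊥ :=
  (IsGalois.intermediateFieldEquivSubgroup (F := F) (E := E)).map_top

/-- The key lemma, inside a finite Galois extension `E/F`. -/
lemma key_relfinrank (K₁ K₂ L : IntermediateField F E) [IsGalois F ↥K₁] [IsGalois F ↥K₂]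
    (hsup : K₁ ⊔ K₂ = ⊤) (hdisj : K₁ ⊓ K₂ = ⊥) (h1 : L ⊓ K₁ = ⊥) (h2 : L ⊓ K₂ = ⊥) :
    relfinrank L ((L ⊔ K₁) ⊓ (L ⊔ K₂)) = relfinrank ⊥ L := by
  classical
  haveI : Fintype (E ≃ₐ[F] E) := AlgEquiv.fintype F E
  set H := fixingSubgroup L with hH
  set N₁ := fixingSubgroup K₁ with hN₁
  set N₂ := fixingSubgroup K₂ with hN₂
  haveI : N₁.Normal := IsGalois.fixingSubgroup_normal_of_isGalois K₁
  haveI : N₂.Normal := IsGalois.fixingSubgroup_normal_of_isGalois K₂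
  have hHN₁ : H ⊔ N₁ = ⊤ := by
    rw [← fixingSubgroup_inf' L K₁, h1, IntermediateField.fixingSubgroup_bot]
  have hHN₂ : H ⊔ N₂ = ⊤ := by
    rw [← fixingSubgroup_inf' L K₂, h2, IntermediateField.fixingSubgroup_bot]
  have hN₁N₂sup : N₁ ⊔ N₂ = ⊤ := by
    rw [← fixingSubgroup_inf' K₁ K₂, hdisj, IntermediateField.fixingSubgroup_bot]
  have hN₁N₂inf : N₁ ⊓ N₂ = ⊥ := by
    rw [← fixingSubgroup_sup' K₁ K₂, hsup, fixingSubgroup_top']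
  set g := Nat.card (E ≃ₐ[F] E) with hgdef
  set h := Nat.card ↥H with hhdef
  set a := Nat.card ↥(H ⊓ N₁) with hadef
  set b := Nat.card ↥(H ⊓ N₂) with hbdef
  have hg : g = Nat.card ↥N₁ * Nat.card ↥N₂ := by
    have := aux_card_sup_mul_card_inf N₁ N₂
    rwa [hN₁N₂sup, hN₁N₂inf, Subgroup.card_bot, mul_one, Subgroup.card_top] at this
  have c1 : g * a = h * Nat.card ↥N₁ := by
    have := aux_card_sup_mul_card_inf H N₁
    rwa [hHN₁, Subgroup.card_top] at this
  have c2 : g * b = h * Nat.card ↥N₂ := by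
    have := aux_card_sup_mul_card_inf H N₂
    rwa [hHN₂, Subgroup.card_top] at this
  have c4 : Nat.card ↥((H ⊓ N₁) ⊔ (H ⊓ N₂)) = a * b := by
    have hA : H ⊓ N₁ ≤ H := inf_le_left
    have hB : H ⊓ N₂ ≤ H := inf_le_left
    have hABinf : (H ⊓ N₁) ⊓ (H ⊓ N₂) = ⊥ := by
      rw [← le_bot_iff, ← hN₁N₂inf]
      exact inf_le_inf inf_le_right inf_le_right
    haveI : ((H ⊓ N₂).subgroupOf H).Normal := by
      rw [Subgroup.inf_subgroupOf_left]
      infer_instance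
    have := aux_card_sup_mul_card_inf ((H ⊓ N₁).subgroupOf H) ((H ⊓ N₂).subgroupOf H)
    have hinf : (H ⊓ N₁).subgroupOf H ⊓ (H ⊓ N₂).subgroupOf H = ⊥ := by
      have heq : (H ⊓ N₁).subgroupOf H ⊓ (H ⊓ N₂).subgroupOf H
          = ((H ⊓ N₁) ⊓ (H ⊓ N₂)).subgroupOf H := (Subgroup.comap_inf _ _ _).symm
      rw [heq, hABinf, Subgroup.bot_subgroupOf]
    rw [← Subgroup.subgroupOf_sup hA hB, hinf, Subgroup.card_bot, mul_one,
      Nat.card_congr (Subgroup.subgroupOfEquivOfLe (sup_le hA hB)).toEquiv,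
      Nat.card_congr (Subgroup.subgroupOfEquivOfLe hA).toEquiv,
      Nat.card_congr (Subgroup.subgroupOfEquivOfLe hB).toEquiv] at this
    exact this
  have hfixJ : fixingSubgroup ((L ⊔ K₁) ⊓ (L ⊔ K₂)) = (H ⊓ N₁) ⊔ (H ⊓ N₂) := by
    rw [fixingSubgroup_inf', fixingSubgroup_sup', fixingSubgroup_sup']
  have eq1 : relfinrank L ((L ⊔ K₁) ⊓ (L ⊔ K₂)) * (a * b) = h := by
    have := relfinrank_mul_card_fixing (le_inf le_sup_left le_sup_left :
      L ≤ (L ⊔ K₁) ⊓ (L ⊔ K₂))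
    rwa [hfixJ, c4] at this
  have eq2 : relfinrank ⊥ L * h = g := by
    have := relfinrank_mul_card_fixing (bot_le : (⊥ : IntermediateField F E) ≤ L)
    rwa [IntermediateField.fixingSubgroup_bot, Subgroup.card_top] at this
  have hhpos : 0 < h := Nat.card_pos
  have hgpos : 0 < g := Nat.card_pos
  -- from c1, c2, hg : g * (a * b) = h * h
  have keynum : g * (a * b) = h * h := by
    have e := congrArg₂ (· * ·) c1 c2
    have : g * (g * (a * b)) = g * (h * h) := by
      calc g * (g * (a * b)) = g * a * (g * b) := by ring
        _ = h * Nat.card ↥N₁ * (h * Nat.card ↥N₂) := by rw [c1, c2]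
        _ = h * h * (Nat.card ↥N₁ * Nat.card ↥N₂) := by ring
        _ = g * (h * h) := by rw [← hg]; ring
    exact Nat.eq_of_mul_eq_mul_left hgpos this
  have hx : relfinrank L ((L ⊔ K₁) ⊓ (L ⊔ K₂)) * h = g := by
    have : relfinrank L ((L ⊔ K₁) ⊓ (L ⊔ K₂)) * h * h = g * h := by
      calc relfinrank L ((L ⊔ K₁) ⊓ (L ⊔ K₂)) * h * h
          = relfinrank L ((L ⊔ K₁) ⊓ (L ⊔ K₂)) * (g * (a * b)) := by rw [keynum]; ring
        _ = relfinrank L ((L ⊔ K₁) ⊓ (L ⊔ K₂)) * (a * b) * g := by ring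
        _ = h * g := by rw [eq1]
        _ = g * h := by ring
    exact Nat.eq_of_mul_eq_mul_right hhpos this
  have := hx.trans eq2.symm
  exact Nat.eq_of_mul_eq_mul_right hhpos this

end FieldKey

/-- If `K₁/K`, `K₂/K` are finite Galois with `K₁ ∩ K₂ = K`, and `K ⊆ L ⊆ K₁K₂`
satisfies `L ∩ K₁ = K` and `L ∩ K₂ = K`, then `[LK₁ ∩ LK₂ : L] = [L : K]`. -/
theorem stmt_15 {K : Type*} [Field K]
    (K₁ K₂ : IntermediateField K (AlgebraicClosure K))
    [FiniteDimensional K ↥K₁] [FiniteDimensional K ↥K₂]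
    [IsGalois K ↥K₁] [IsGalois K ↥K₂]
    (hdisj : K₁ ⊓ K₂ = ⊥)
    (L : IntermediateField K (AlgebraicClosure K)) (hL : L ≤ K₁ ⊔ K₂)
    (h1 : L ⊓ K₁ = ⊥) (h2 : L ⊓ K₂ = ⊥) :
    Module.finrank ↥L
        ↥(IntermediateField.extendScalars
          (le_inf le_sup_left le_sup_left : L ≤ (L ⊔ K₁) ⊓ (L ⊔ K₂))) =
      Module.finrank K ↥L := by
  set Ω := AlgebraicClosure K
  set M := K₁ ⊔ K₂ with hM
  haveI : FiniteDimensional K ↥M := IntermediateField.finiteDimensional_sup K₁ K₂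
  haveI : IsGalois K ↥M := ⟨⟩
  set f : ↥M →ₐ[K] Ω := M.val with hf
  have hrange : f.fieldRange = M := IntermediateField.fieldRange_val M
  have hK₁ : K₁ ≤ f.fieldRange := by rw [hrange, hM]; exact le_sup_left
  have hK₂ : K₂ ≤ f.fieldRange := by rw [hrange, hM]; exact le_sup_right
  have hLr : L ≤ f.fieldRange := by rw [hrange, hM]; exact hL
  have hmapinj : Function.Injective (IntermediateField.map f) := fun A B hAB => by
    rw [← IntermediateField.comap_map f A, ← IntermediateField.comap_map f B, hAB]
  have hcomap_sup : ∀ (A B : IntermediateField K Ω), A ≤ f.fieldRange → B ≤ f.fieldRange →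
      comap f (A ⊔ B) = comap f A ⊔ comap f B := fun A B hA hB => by
    apply hmapinj
    rw [IntermediateField.map_sup, map_comap_eq_self hA, map_comap_eq_self hB,
      map_comap_eq_self (sup_le hA hB)]
  have hcomap_inf : ∀ (A B : IntermediateField K Ω), comap f (A ⊓ B) = comap f A ⊓ comap f B :=
    fun A B => (IntermediateField.gc_map_comap f).u_inf
  have hcomap_bot : comap f (⊥ : IntermediateField K Ω) = ⊥ := by
    conv_lhs => rw [← IntermediateField.map_bot f]
    exact IntermediateField.comap_map f ⊥
  haveI : IsGalois K ↥(comap f K₁) := by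
    have e : ↥(comap f K₁) ≃ₐ[K] ↥K₁ :=
      (IntermediateField.equivMap (comap f K₁) f).trans
        (IntermediateField.equivOfEq (map_comap_eq_self hK₁))
    exact IsGalois.of_algEquiv e.symm
  haveI : IsGalois K ↥(comap f K₂) := by
    have e : ↥(comap f K₂) ≃ₐ[K] ↥K₂ :=
      (IntermediateField.equivMap (comap f K₂) f).trans
        (IntermediateField.equivOfEq (map_comap_eq_self hK₂))
    exact IsGalois.of_algEquiv e.symm
  have hsup' : comap f K₁ ⊔ comap f K₂ = ⊤ := by
    apply hmapinj
    rw [IntermediateField.map_sup, map_comap_eq_self hK₁, map_comap_eq_self hK₂,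
      ← AlgHom.fieldRange_eq_map, hrange, hM]
  have hdisj' : comap f K₁ ⊓ comap f K₂ = ⊥ := by rw [← hcomap_inf, hdisj, hcomap_bot]
  have h1' : comap f L ⊓ comap f K₁ = ⊥ := by rw [← hcomap_inf, h1, hcomap_bot]
  have h2' : comap f L ⊓ comap f K₂ = ⊥ := by rw [← hcomap_inf, h2, hcomap_bot]
  have hJ : (L ⊔ K₁) ⊓ (L ⊔ K₂) ≤ f.fieldRange :=
    le_trans inf_le_left (sup_le hLr hK₁)
  rw [← IntermediateField.relfinrank_eq_finrank_of_le, ← IntermediateField.relfinrank_bot_left,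
    ← IntermediateField.relfinrank_comap_comap_eq_relfinrank_of_le L ((L ⊔ K₁) ⊓ (L ⊔ K₂)) f hJ,
    ← IntermediateField.relfinrank_comap_comap_eq_relfinrank_of_le ⊥ L f hLr,
    hcomap_inf, hcomap_sup L K₁ hLr hK₁, hcomap_sup L K₂ hLr hK₂, hcomap_bot]
  exact key_relfinrank (comap f K₁) (comap f K₂) (comap f L) hsup' hdisj' h1' h2'
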